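/- arXiv:1506.08969 — 5 statements merged into one kernel-verified Lean document; each statement's English description precedes it below -/
import Mathlib

section
/- For every cardinal κ, every n ∈ ℕ, and every Hausdorff shift-invariant topology τ on Alt(κ), the set Alt_n(κ) = {f ∈ Alt(κ) : |supp(f)| = n} is a discrete subspace of (Alt(κ), τ). -/
open Equiv

universe u

/-- The alternating group on an arbitrary type `α`: the subgroup of `Equiv.Perm α`
generated by products of two transpositions. -/
def altGroup (α : Type*) [DecidableEq α] : Subgroup (Equiv.Perm α) :=
  Subgroup.closure {σ | ∃ τ₁ τ₂ : Equiv.Perm α, τ₁.IsSwap ∧ τ₂.IsSwap ∧ σ = τ₁ * τ₂}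

section Aux

variable {α : Type u} [DecidableEq α]

lemma trip_mem {x a b : α} (hxa : x ≠ a) (hxb : x ≠ b) :
    Equiv.swap x a * Equiv.swap x b ∈ altGroup α :=
  Subgroup.subset_closure ⟨Equiv.swap x a, Equiv.swap x b, ⟨x, a, hxa, rfl⟩, ⟨x, b, hxb, rfl⟩, rfl⟩

lemma swap_commute_of_fixed {g : Equiv.Perm α} {x a : α} (hx : g x = x) (ha : g a = a) :
    Equiv.swap x a * g = g * Equiv.swap x a := by
  have h := (Equiv.swap_apply_apply g x a)
  rw [hx, ha] at h
  conv_lhs => rw [h]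
  group

lemma trip_commute {g : Equiv.Perm α} {x a b : α} (hx : g x = x) (ha : g a = a)
    (hb : g b = b) :
    (Equiv.swap x a * Equiv.swap x b) * g = g * (Equiv.swap x a * Equiv.swap x b) := by
  rw [mul_assoc, swap_commute_of_fixed hx hb, ← mul_assoc, swap_commute_of_fixed hx ha,
    mul_assoc]

lemma trip_apply_a {x a b : α} (hax : a ≠ x) (hab : a ≠ b) :
    (Equiv.swap x a * Equiv.swap x b) a = x := by
  rw [Equiv.Perm.mul_apply, Equiv.swap_apply_of_ne_of_ne hax hab,
    Equiv.swap_apply_right]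

/-- the basic "twisted fiber complement" sets -/
def tripSet (x a b : α) : Set (altGroup α) :=
  if h : x ≠ a ∧ x ≠ b ∧ a ≠ b then
    {y | (⟨_, trip_mem h.1 h.2.1⟩ : altGroup α) * y ≠ y * ⟨_, trip_mem h.1 h.2.1⟩}
  else Set.univ

lemma isOpen_tripSet (t : TopologicalSpace (altGroup α)) (ht2 : @T2Space (altGroup α) t)
    (hshift : ∀ a b : altGroup α,
      @IsHomeomorph (altGroup α) (altGroup α) t t (fun x => a * x * b))
    (x a b : α) : @IsOpen _ t (tripSet x a b) := by
  letI := t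
  haveI := ht2
  unfold tripSet
  split
  case isTrue h =>
    set p : altGroup α := ⟨_, trip_mem h.1 h.2.1⟩ with hp
    have hc1 : Continuous (fun y : altGroup α => p * y) := by
      simpa [mul_one] using (hshift p 1).continuous
    have hc2 : Continuous (fun y : altGroup α => y * p) := by
      simpa [one_mul] using (hshift 1 p).continuous
    have hcl : IsClosed {y : altGroup α | p * y = y * p} := isClosed_eq hc1 hc2
    have heq : {y : altGroup α | p * y ≠ y * p} = {y : altGroup α | p * y = y * p}ᶜ := rfl
    rw [heq]
    exact hcl.isOpen_compl
  case isFalse h => exact isOpen_univ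

lemma mem_tripSet {f : altGroup α} {x a b : α} (hx : (f : Equiv.Perm α) x ≠ x)
    (ha : (f : Equiv.Perm α) a = a) (hxa : x ≠ a) (hxb : x ≠ b) (hab : a ≠ b) :
    f ∈ tripSet x a b := by
  unfold tripSet
  rw [dif_pos ⟨hxa, hxb, hab⟩]
  intro hcontra
  have h2 : (Equiv.swap x a * Equiv.swap x b) * (f : Equiv.Perm α)
      = (f : Equiv.Perm α) * (Equiv.swap x a * Equiv.swap x b) :=
    congrArg Subtype.val hcontra
  have h3 := congrArg (fun σ : Equiv.Perm α => σ a) h2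
  have e1 : (Equiv.swap x b) a = a := Equiv.swap_apply_of_ne_of_ne (Ne.symm hxa) hab
  have e2 : (Equiv.swap x a) a = x := Equiv.swap_apply_right x a
  simp only [Equiv.Perm.mul_apply, ha, e1, e2] at h3
  exact hx h3.symm

lemma not_mem_tripSet {g : altGroup α} {x a b : α} (hx : (g : Equiv.Perm α) x = x)
    (ha : (g : Equiv.Perm α) a = a) (hb : (g : Equiv.Perm α) b = b)
    (hxa : x ≠ a) (hxb : x ≠ b) (hab : a ≠ b) :
    g ∉ tripSet x a b := by
  unfold tripSet
  rw [dif_pos ⟨hxa, hxb, hab⟩]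
  intro hcontra
  exact hcontra (Subtype.ext (trip_commute hx ha hb))

/-- permutations in the alternating group supported inside a fixed finite set form
a finite set -/
lemma finite_supported (F : Set α) (hF : F.Finite) :
    {h : altGroup α | {z | (h : Equiv.Perm α) z ≠ z} ⊆ F}.Finite := by
  classical
  rw [← Set.finite_coe_iff]
  have hmap : ∀ h : {h : altGroup α | {z | (h : Equiv.Perm α) z ≠ z} ⊆ F},
      ∀ z : hF.toFinset, ((h : altGroup α) : Equiv.Perm α) z ∈ hF.toFinset := by
    rintro ⟨h, hh⟩ ⟨z, hz⟩
    simp only [Set.Finite.mem_toFinset] at hz ⊢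
    by_cases hzz : (h : Equiv.Perm α) z = z
    · rwa [hzz]
    · exact hh ((h : Equiv.Perm α).injective.ne hzz)
  set m : {h : altGroup α | {z | (h : Equiv.Perm α) z ≠ z} ⊆ F} →
      (hF.toFinset → hF.toFinset) :=
    fun h z => ⟨((h : altGroup α) : Equiv.Perm α) z, hmap h z⟩ with hm
  have hinj : Function.Injective m := by
    rintro ⟨h₁, hh₁⟩ ⟨h₂, hh₂⟩ heq
    have hpt : ∀ z : α, z ∈ F → ((h₁ : Equiv.Perm α)) z = ((h₂ : Equiv.Perm α)) z := by
      intro z hz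
      have := congrFun heq ⟨z, hF.mem_toFinset.mpr hz⟩
      simpa [hm, Subtype.ext_iff] using this
    apply Subtype.ext
    apply Subtype.ext
    apply Equiv.ext
    intro z
    by_cases hz : z ∈ F
    · exact hpt z hz
    · have e1 : (h₁ : Equiv.Perm α) z = z := by
        by_contra hne; exact hz (hh₁ hne)
      have e2 : (h₂ : Equiv.Perm α) z = z := by
        by_contra hne; exact hz (hh₂ hne)
      rw [e1, e2]
  exact Finite.of_injective m hinj

end Aux

/-- For every cardinal (type `α`), every `n : ℕ` and every Hausdorff shift-invariant topology
`t` on `Alt(α)`, the set `Alt_n(α) = {f ∈ Alt(α) : |supp f| = n}` is a discrete subspace. -/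
theorem altn_discrete (α : Type u) [DecidableEq α] (n : ℕ)
    (t : TopologicalSpace (altGroup α)) (ht2 : @T2Space (altGroup α) t)
    (hshift : ∀ a b : altGroup α,
      @IsHomeomorph (altGroup α) (altGroup α) t t (fun x => a * x * b)) :
    @DiscreteTopology {f : altGroup α | {x | (f : Equiv.Perm α) x ≠ x}.encard = (n : ℕ∞)}
      (TopologicalSpace.induced Subtype.val t) := by
  classical
  letI := t
  haveI := ht2
  cases finite_or_infinite α with
  | inl hfin =>
    haveI : Finite (Equiv.Perm α) :=
      Finite.of_injective (fun σ : Equiv.Perm α => (σ : α → α))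
        (fun _ _ h => Equiv.coe_fn_injective h)
    haveI : Finite (altGroup α) := Subtype.finite
    haveI : DiscreteTopology (altGroup α) := Finite.instDiscreteTopology
    exact (inferInstance :
      DiscreteTopology {f : altGroup α | {x | (f : Equiv.Perm α) x ≠ x}.encard = (n : ℕ∞)})
  | inr hinf =>
    apply discreteTopology_iff_isOpen_singleton.mpr
    rintro ⟨f, hf⟩
    simp only [Set.mem_setOf_eq] at hf
    set F : Set α := {x | (f : Equiv.Perm α) x ≠ x} with hFdef
    have hFfin : F.Finite := Set.finite_of_encard_eq_coe hf
    obtain ⟨A, hAsub, hAcard⟩ := hFfin.infinite_compl.exists_subset_card_eq (n + 2)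
    have hEfin : ({h : altGroup α | {z | (h : Equiv.Perm α) z ≠ z} ⊆ F} \ {f}).Finite :=
      (finite_supported F hFfin).diff
    set U : Set (altGroup α) :=
      (⋂ x ∈ F, ⋂ a ∈ (A : Set α), ⋂ b ∈ (A : Set α), tripSet x a b) ∩
        (⋂ h ∈ ({h : altGroup α | {z | (h : Equiv.Perm α) z ≠ z} ⊆ F} \ {f}), {h}ᶜ) with hU
    have hUopen : IsOpen U := by
      apply IsOpen.inter
      · exact hFfin.isOpen_biInter fun x _ =>
          A.finite_toSet.isOpen_biInter fun a _ =>
            A.finite_toSet.isOpen_biInter fun b _ => isOpen_tripSet t ht2 hshift x a b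
      · exact hEfin.isOpen_biInter fun h _ => isOpen_compl_singleton
    rw [isOpen_induced_iff]
    refine ⟨U, hUopen, ?_⟩
    ext ⟨g, hg⟩
    simp only [Set.mem_preimage, Set.mem_singleton_iff, Subtype.mk.injEq]
    simp only [Set.mem_setOf_eq] at hg
    constructor
    · -- g ∈ U → g = f
      intro hgU
      by_contra hne
      obtain ⟨hg1, hg2⟩ := hgU
      by_cases hsupp : {z | (g : Equiv.Perm α) z ≠ z} ⊆ F
      · have hmem : g ∈ ({h : altGroup α | {z | (h : Equiv.Perm α) z ≠ z} ⊆ F} \ {f}) :=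
          ⟨hsupp, hne⟩
        exact (Set.mem_iInter₂.mp hg2 g hmem) rfl
      · have hGfin : {z | (g : Equiv.Perm α) z ≠ z}.Finite := Set.finite_of_encard_eq_coe hg
        have hFsub : ¬ F ⊆ {z | (g : Equiv.Perm α) z ≠ z} := by
          intro hsub
          apply hsupp
          have hEq : F = {z | (g : Equiv.Perm α) z ≠ z} :=
            hFfin.eq_of_subset_of_encard_le hsub (by rw [hg, hf])
          rw [← hEq]
        obtain ⟨x, hxF, hxg⟩ := Set.not_subset.mp hFsub
        have hgx : (g : Equiv.Perm α) x = x := not_not.mp hxg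
        have hGcard : hGfin.toFinset.card = n := by
          have h1 := hGfin.encard_eq_coe_toFinset_card
          rw [hg] at h1
          exact_mod_cast h1.symm
        have h2 : 1 < (A \ hGfin.toFinset).card := by
          have h3 := Finset.le_card_sdiff hGfin.toFinset A
          omega
        obtain ⟨a, ha, b, hb, hab⟩ := Finset.one_lt_card.mp h2
        rw [Finset.mem_sdiff] at ha hb
        have hga : (g : Equiv.Perm α) a = a := by
          have := ha.2
          rw [hGfin.mem_toFinset] at this
          exact not_not.mp this
        have hgb : (g : Equiv.Perm α) b = b := by
          have := hb.2
          rw [hGfin.mem_toFinset] at this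
          exact not_not.mp this
        have hxa : x ≠ a := fun h => (hAsub ha.1) (h ▸ hxF)
        have hxb : x ≠ b := fun h => (hAsub hb.1) (h ▸ hxF)
        have step1 := Set.mem_iInter₂.mp hg1 x hxF
        have step2 := Set.mem_iInter₂.mp step1 a (Finset.mem_coe.mpr ha.1)
        have step3 := Set.mem_iInter₂.mp step2 b (Finset.mem_coe.mpr hb.1)
        exact not_mem_tripSet hgx hga hgb hxa hxb hab step3
    · -- g = f → g ∈ U
      rintro rfl
      constructor
      · refine Set.mem_iInter₂.mpr fun x hx => Set.mem_iInter₂.mpr fun a ha =>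
          Set.mem_iInter₂.mpr fun b hb => ?_
        by_cases hab : a = b
        · unfold tripSet
          rw [dif_neg (by tauto)]
          exact Set.mem_univ _
        · have haF : a ∉ F := hAsub (Finset.mem_coe.mp ha)
          have hbF : b ∉ F := hAsub (Finset.mem_coe.mp hb)
          have hxa : x ≠ a := fun h => haF (h ▸ hx)
          have hxb : x ≠ b := fun h => hbF (h ▸ hx)
          exact mem_tripSet hx (not_not.mp haF) hxa hxb hab
      · refine Set.mem_iInter₂.mpr fun h hh => ?_
        intro hcontra
        exact hh.2 (by rw [Set.mem_singleton_iff] at hcontra ⊢; exact hcontra.symm)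
end

section
/- Let κ be an infinite cardinal and G a group with Alt(κ) ⊆ G ⊆ Sym(κ). Then every Hausdorff shift-invariant topology τ on G has spread at least κ: there exist discrete subspaces of (G, τ) of cardinality arbitrarily close to κ (in fact sup of cardinalities of discrete subspaces equals κ). -/
open Equiv

universe u

namespace SpreadAux
variable {α : Type*} [DecidableEq α]

/-- the 3-cycle `u → v → w → u`. -/
def c3 (u v w : α) : Equiv.Perm α := Equiv.swap u v * Equiv.swap v w

lemma c3_apply_left {u v w : α} (huv : u ≠ v) (huw : u ≠ w) : c3 u v w u = v := by
  simp [c3, Perm.mul_apply, swap_apply_of_ne_of_ne huv huw]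

lemma c3_apply_mid {u v w : α} (hwu : w ≠ u) (hwv : w ≠ v) : c3 u v w v = w := by
  simp [c3, Perm.mul_apply, swap_apply_of_ne_of_ne hwu hwv]

lemma c3_apply_right {u v w : α} : c3 u v w w = u := by
  simp [c3, Perm.mul_apply]

lemma c3_apply_other {u v w z : α} (h1 : z ≠ u) (h2 : z ≠ v) (h3 : z ≠ w) :
    c3 u v w z = z := by
  simp [c3, Perm.mul_apply, swap_apply_of_ne_of_ne h2 h3, swap_apply_of_ne_of_ne h1 h2]

lemma c3_mem_alt {u v w : α} (huv : u ≠ v) (hvw : v ≠ w) : c3 u v w ∈ altGroup α :=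
  Subgroup.subset_closure ⟨Equiv.swap u v, Equiv.swap v w, ⟨u, v, huv, rfl⟩, ⟨v, w, hvw, rfl⟩, rfl⟩

lemma mul_comm_of_disjoint {σ τ : Perm α} (h : ∀ z, ¬(σ z ≠ z ∧ τ z ≠ z)) :
    σ * τ = τ * σ := by
  ext z
  simp only [Perm.mul_apply]
  by_cases hσ : σ z = z
  · by_cases hτ : τ z = z
    · simp [hσ, hτ]
    · have h2 : τ (τ z) ≠ τ z := fun e => hτ (τ.injective e)
      have h3 : σ (τ z) = τ z := by
        by_contra h3; exact h (τ z) ⟨h3, h2⟩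
      rw [hσ, h3]
  · have hτ : τ z = z := by by_contra hτ; exact h z ⟨hσ, hτ⟩
    have h2 : σ (σ z) ≠ σ z := fun e => hσ (σ.injective e)
    have h3 : τ (σ z) = σ z := by
      by_contra h3; exact h (σ z) ⟨h2, h3⟩
    rw [hτ, h3]

lemma conj_ne {g : Perm α} {m x y : α} (hgm : g m ≠ m) (hgy : g y = y) :
    c3 m x y * g ≠ g * c3 m x y := by
  intro e
  have h1 := congrArg (fun σ : Perm α => σ y) e
  simp only [Perm.mul_apply, hgy, c3_apply_right] at h1
  exact hgm h1.symm

end SpreadAux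

open SpreadAux

/-- For an infinite type `α` and a group `G` with `Alt(α) ⊆ G ⊆ Sym(α)`, every Hausdorff
shift-invariant topology on `G` has spread at least `#α`: for every cardinal `μ < #α` there
is a discrete subspace of cardinality greater than `μ`. -/
theorem spread_ge (α : Type u) [DecidableEq α] [Infinite α]
    (G : Subgroup (Equiv.Perm α)) (hG : altGroup α ≤ G)
    (t : TopologicalSpace G) (ht2 : @T2Space G t)
    (hshift : ∀ a b : G, @IsHomeomorph G G t t (fun x => a * x * b)) :
    ∀ μ : Cardinal.{u}, μ < Cardinal.mk α →
      ∃ D : Set G, @DiscreteTopology D (TopologicalSpace.induced Subtype.val t) ∧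
        μ < Cardinal.mk D := by
  classical
  intro μ hμ
  letI : TopologicalSpace G := t
  haveI : T2Space G := ht2
  obtain ⟨p, q, hpq⟩ := exists_pair_ne α
  refine ⟨{g : G | ∃ u v w : α, u ≠ v ∧ u ≠ w ∧ v ≠ w ∧ (g : Perm α) = c3 u v w}, ?_, ?_⟩
  · -- discreteness
    set D : Set G := {g : G | ∃ u v w : α, u ≠ v ∧ u ≠ w ∧ v ≠ w ∧ (g : Perm α) = c3 u v w}
      with hDdef
    refine (@discreteTopology_iff_isOpen_singleton _ (TopologicalSpace.induced Subtype.val t)).mpr ?_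
    rintro ⟨g, hg⟩
    obtain ⟨u, v, w, huv, huw, hvw, hgp⟩ := hg
    -- fresh points
    obtain ⟨x₁, hx₁⟩ := Infinite.exists_notMem_finset ({u, v, w} : Finset α)
    obtain ⟨y₁, hy₁⟩ := Infinite.exists_notMem_finset ({u, v, w, x₁} : Finset α)
    obtain ⟨x₂, hx₂⟩ := Infinite.exists_notMem_finset ({u, v, w, x₁, y₁} : Finset α)
    obtain ⟨y₂, hy₂⟩ := Infinite.exists_notMem_finset ({u, v, w, x₁, y₁, x₂} : Finset α)
    obtain ⟨x₃, hx₃⟩ := Infinite.exists_notMem_finset ({u, v, w, x₁, y₁, x₂, y₂} : Finset α)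
    obtain ⟨y₃, hy₃⟩ := Infinite.exists_notMem_finset ({u, v, w, x₁, y₁, x₂, y₂, x₃} : Finset α)
    simp only [Finset.mem_insert, Finset.mem_singleton, not_or] at hx₁ hy₁ hx₂ hy₂ hx₃ hy₃
    obtain ⟨h1u, h1v, h1w⟩ := hx₁
    obtain ⟨k1u, k1v, k1w, k1x⟩ := hy₁
    obtain ⟨h2u, h2v, h2w, h2x1, h2y1⟩ := hx₂
    obtain ⟨k2u, k2v, k2w, k2x1, k2y1, k2x2⟩ := hy₂
    obtain ⟨h3u, h3v, h3w, h3x1, h3y1, h3x2, h3y2⟩ := hx₃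
    obtain ⟨k3u, k3v, k3w, k3x1, k3y1, k3x2, k3y2, k3x3⟩ := hy₃
    have hd12 : ∀ a b : α, (a = u ∨ a = x₁ ∨ a = y₁) → (b = v ∨ b = x₂ ∨ b = y₂) → a ≠ b := by
      rintro a b (rfl | rfl | rfl) (rfl | rfl | rfl) <;> intro e <;> subst e <;> exact absurd rfl (by assumption)
    have hd13 : ∀ a b : α, (a = u ∨ a = x₁ ∨ a = y₁) → (b = w ∨ b = x₃ ∨ b = y₃) → a ≠ b := by
      rintro a b (rfl | rfl | rfl) (rfl | rfl | rfl) <;> intro e <;> subst e <;> exact absurd rfl (by assumption)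
    have hd23 : ∀ a b : α, (a = v ∨ a = x₂ ∨ a = y₂) → (b = w ∨ b = x₃ ∨ b = y₃) → a ≠ b := by
      rintro a b (rfl | rfl | rfl) (rfl | rfl | rfl) <;> intro e <;> subst e <;> exact absurd rfl (by assumption)
    -- the three conjugating 3-cycles, as elements of G
    set A₁ : G := ⟨c3 u x₁ y₁, hG (c3_mem_alt (Ne.symm h1u) (Ne.symm k1x))⟩ with hA₁
    set A₂ : G := ⟨c3 v x₂ y₂, hG (c3_mem_alt (Ne.symm h2v) (Ne.symm k2x2))⟩ with hA₂
    set A₃ : G := ⟨c3 w x₃ y₃, hG (c3_mem_alt (Ne.symm h3w) (Ne.symm k3x3))⟩ with hA₃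
    -- g moves u, v, w and fixes the fresh points
    have hgu : (g : Perm α) u ≠ u := by rw [hgp, c3_apply_left huv huw]; exact Ne.symm huv
    have hgv : (g : Perm α) v ≠ v := by
      rw [hgp, c3_apply_mid (Ne.symm huw) (Ne.symm hvw)]; exact Ne.symm hvw
    have hgw : (g : Perm α) w ≠ w := by rw [hgp, c3_apply_right]; exact huw
    have hgy₁ : (g : Perm α) y₁ = y₁ := by rw [hgp]; exact c3_apply_other k1u k1v k1w
    have hgy₂ : (g : Perm α) y₂ = y₂ := by rw [hgp]; exact c3_apply_other k2u k2v k2w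
    have hgy₃ : (g : Perm α) y₃ = y₃ := by rw [hgp]; exact c3_apply_other k3u k3v k3w
    -- the conjugates of g differ from g
    have hconj : ∀ A : G, (A : Perm α) * (g : Perm α) ≠ (g : Perm α) * (A : Perm α) →
        A * g * A⁻¹ ≠ g := by
      intro A hA e
      apply hA
      rw [mul_inv_eq_iff_eq_mul] at e
      have := congrArg (fun z : G => (z : Perm α)) e
      simpa using this
    have hne₁ : A₁ * g * A₁⁻¹ ≠ g := hconj A₁ (by rw [hA₁]; exact conj_ne hgu hgy₁)
    have hne₂ : A₂ * g * A₂⁻¹ ≠ g := hconj A₂ (by rw [hA₂]; exact conj_ne hgv hgy₂)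
    have hne₃ : A₃ * g * A₃⁻¹ ≠ g := hconj A₃ (by rw [hA₃]; exact conj_ne hgw hgy₃)
    obtain ⟨V₁, U₁, hV₁, hU₁, hcV₁, hgU₁, hUV₁⟩ := t2_separation hne₁
    obtain ⟨V₂, U₂, hV₂, hU₂, hcV₂, hgU₂, hUV₂⟩ := t2_separation hne₂
    obtain ⟨V₃, U₃, hV₃, hU₃, hcV₃, hgU₃, hUV₃⟩ := t2_separation hne₃
    set W₀ : Set G :=
      (U₁ ∩ (fun x : G => A₁ * x * A₁⁻¹) ⁻¹' V₁) ∩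
      ((U₂ ∩ (fun x : G => A₂ * x * A₂⁻¹) ⁻¹' V₂) ∩
       (U₃ ∩ (fun x : G => A₃ * x * A₃⁻¹) ⁻¹' V₃)) with hW₀def
    have hW₀open : IsOpen W₀ := by
      refine ((hU₁.inter ((hshift A₁ A₁⁻¹).continuous.isOpen_preimage _ hV₁)).inter
        ((hU₂.inter ((hshift A₂ A₂⁻¹).continuous.isOpen_preimage _ hV₂)).inter
         (hU₃.inter ((hshift A₃ A₃⁻¹).continuous.isOpen_preimage _ hV₃))))
    have hgW₀ : g ∈ W₀ := ⟨⟨hgU₁, hcV₁⟩, ⟨hgU₂, hcV₂⟩, ⟨hgU₃, hcV₃⟩⟩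
    -- the finite "support in F" set
    set F : Finset α := {u, v, w, x₁, y₁, x₂, y₂, x₃, y₃} with hFdef
    set Bs : Set G := {h : G | ∀ m : α, m ∉ F → (h : Perm α) m = m} with hBdef
    have hBfin : Bs.Finite := by
      have hmaps : ∀ h ∈ Bs, ∀ m ∈ F, (h : Perm α) m ∈ F := by
        intro h hh m hm
        by_contra hcon
        have h1 : (h : Perm α) ((h : Perm α) m) = (h : Perm α) m := hh _ hcon
        have h2 := (h : Perm α).injective h1
        rw [h2] at hcon
        exact hcon hm
      have hinj : Function.Injective
          (fun (h : Bs) => (fun m : F => (⟨(h.1 : Perm α) m, hmaps h.1 h.2 m m.2⟩ : F))) := by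
        intro h₁ h₂ he
        apply Subtype.ext
        apply Subtype.ext
        ext m
        by_cases hm : m ∈ F
        · have := congrFun he ⟨m, hm⟩
          simpa using this
        · rw [h₁.2 m hm, h₂.2 m hm]
      have : Finite Bs := Finite.of_injective _ hinj
      exact Set.finite_coe_iff.mp this
    -- key claim : W₀ ∩ D ⊆ Bs
    have hWD : ∀ h : G, h ∈ W₀ → h ∈ D → h ∈ Bs := by
      intro h hW hhD
      obtain ⟨x, y, z, hxy, hxz, hyz, hhp⟩ := hhD
      have excl : ∀ (A : G) (U V : Set G), Disjoint V U → h ∈ U →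
          h ∈ (fun x : G => A * x * A⁻¹) ⁻¹' V →
          ∃ m, (A : Perm α) m ≠ m ∧ (h : Perm α) m ≠ m := by
        intro A U V hdis hU hV
        by_contra hcon
        push_neg at hcon
        have hcomm : (A : Perm α) * (h : Perm α) = (h : Perm α) * (A : Perm α) :=
          mul_comm_of_disjoint (fun z hz => hz.2 (hcon z hz.1))
        have hfix : A * h * A⁻¹ = h := by
          apply Subtype.ext
          push_cast
          rw [hcomm, mul_inv_cancel_right]
        have : h ∈ V := by rw [← hfix]; exact hV
        exact (Set.disjoint_left.mp hdis this) hU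
      obtain ⟨z₁, hz₁A, hz₁h⟩ := excl A₁ U₁ V₁ hUV₁ hW.1.1 hW.1.2
      obtain ⟨z₂, hz₂A, hz₂h⟩ := excl A₂ U₂ V₂ hUV₂ hW.2.1.1 hW.2.1.2
      obtain ⟨z₃, hz₃A, hz₃h⟩ := excl A₃ U₃ V₃ hUV₃ hW.2.2.1 hW.2.2.2
      have hz₁T : z₁ = u ∨ z₁ = x₁ ∨ z₁ = y₁ := by
        by_contra hc; push_neg at hc
        rw [hA₁] at hz₁A
        exact hz₁A (c3_apply_other hc.1 hc.2.1 hc.2.2)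
      have hz₂T : z₂ = v ∨ z₂ = x₂ ∨ z₂ = y₂ := by
        by_contra hc; push_neg at hc
        rw [hA₂] at hz₂A
        exact hz₂A (c3_apply_other hc.1 hc.2.1 hc.2.2)
      have hz₃T : z₃ = w ∨ z₃ = x₃ ∨ z₃ = y₃ := by
        by_contra hc; push_neg at hc
        rw [hA₃] at hz₃A
        exact hz₃A (c3_apply_other hc.1 hc.2.1 hc.2.2)
      have hsuppS : ∀ m : α, (h : Perm α) m ≠ m → m = x ∨ m = y ∨ m = z := by
        intro m hm
        by_contra hc; push_neg at hc
        rw [hhp] at hm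
        exact hm (c3_apply_other hc.1 hc.2.1 hc.2.2)
      have hz₁S := hsuppS z₁ hz₁h
      have hz₂S := hsuppS z₂ hz₂h
      have hz₃S := hsuppS z₃ hz₃h
      have h12 : z₁ ≠ z₂ := hd12 z₁ z₂ hz₁T hz₂T
      have h13 : z₁ ≠ z₃ := hd13 z₁ z₃ hz₁T hz₃T
      have h23 : z₂ ≠ z₃ := hd23 z₂ z₃ hz₂T hz₃T
      have hsub : ({z₁, z₂, z₃} : Finset α) ⊆ {x, y, z} := by
        intro a ha
        simp only [Finset.mem_insert, Finset.mem_singleton] at ha ⊢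
        rcases ha with rfl | rfl | rfl
        · exact hz₁S
        · exact hz₂S
        · exact hz₃S
      have hcard3 : ({z₁, z₂, z₃} : Finset α).card = 3 := by
        rw [Finset.card_insert_of_notMem (by simp [h12, h13]),
            Finset.card_insert_of_notMem (by simp [h23]), Finset.card_singleton]
      have hcardxyz : ({x, y, z} : Finset α).card ≤ 3 := by
        apply le_trans (Finset.card_insert_le _ _)
        simp [Finset.card_insert_le, Nat.succ_le_succ]
        exact lt_of_le_of_lt (Finset.card_insert_le _ _) (by simp)
      have heq : ({z₁, z₂, z₃} : Finset α) = {x, y, z} :=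
        Finset.eq_of_subset_of_card_le hsub (by omega)
      -- conclude membership in Bs
      intro m hm
      by_contra hmov
      have hmS : m ∈ ({x, y, z} : Finset α) := by
        simp only [Finset.mem_insert, Finset.mem_singleton]
        exact hsuppS m hmov
      rw [← heq] at hmS
      simp only [Finset.mem_insert, Finset.mem_singleton] at hmS
      apply hm
      rw [hFdef]
      simp only [Finset.mem_insert, Finset.mem_singleton]
      rcases hmS with rfl | rfl | rfl
      · rcases hz₁T with rfl | rfl | rfl <;> simp
      · rcases hz₂T with rfl | rfl | rfl <;> simp
      · rcases hz₃T with rfl | rfl | rfl <;> simp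
    -- assemble the open set
    have hclosed : IsClosed (Bs \ {g}) := (hBfin.subset (Set.diff_subset)).isClosed
    set W : Set G := W₀ ∩ (Bs \ {g})ᶜ with hWdef
    have hWopen : IsOpen W := hW₀open.inter hclosed.isOpen_compl
    refine isOpen_induced_iff.mpr ⟨W, hWopen, ?_⟩
    ext ⟨h, hh⟩
    simp only [Set.mem_preimage, Set.mem_singleton_iff, Subtype.mk.injEq]
    constructor
    · rintro ⟨hW', hnB⟩
      have hB := hWD h hW' hh
      by_contra hne
      exact hnB ⟨hB, hne⟩
    · rintro rfl
      exact ⟨hgW₀, fun hc => hc.2 rfl⟩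
  · -- cardinality
    have hnp : ∀ x : ↥({p, q}ᶜ : Set α), (x : α) ≠ p ∧ (x : α) ≠ q := by
      intro x
      have := x.2
      simp only [Set.mem_compl_iff, Set.mem_insert_iff, Set.mem_singleton_iff, not_or] at this
      exact this
    let f : ↥({p, q}ᶜ : Set α) →
        ↥{g : G | ∃ u v w : α, u ≠ v ∧ u ≠ w ∧ v ≠ w ∧ (g : Perm α) = c3 u v w} := fun x =>
      ⟨⟨c3 p q x, hG (c3_mem_alt hpq (Ne.symm (hnp x).2))⟩,
        p, q, x, hpq, Ne.symm (hnp x).1, Ne.symm (hnp x).2, rfl⟩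
    have hinj : Function.Injective f := by
      intro x₁ x₂ he
      have he2 : c3 p q (x₁ : α) = c3 p q (x₂ : α) := by
        have := congrArg (fun d : ↥{g : G | ∃ u v w : α,
            u ≠ v ∧ u ≠ w ∧ v ≠ w ∧ (g : Perm α) = c3 u v w} => ((d : G) : Perm α)) he
        simpa [f] using this
      have h1 : c3 p q (x₁ : α) q = x₁ := c3_apply_mid (hnp x₁).1 (hnp x₁).2
      have h2 : c3 p q (x₂ : α) q = x₂ := c3_apply_mid (hnp x₂).1 (hnp x₂).2
      apply Subtype.ext
      rw [← h1, ← h2, he2]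
    have hcompl : Cardinal.mk ↥({p, q}ᶜ : Set α) = Cardinal.mk α := by
      apply Cardinal.mk_compl_of_infinite
      exact lt_of_lt_of_le (Set.toFinite ({p, q} : Set α)).lt_aleph0 (Cardinal.aleph0_le_mk α)
    calc μ < Cardinal.mk α := hμ
      _ = Cardinal.mk ↥({p, q}ᶜ : Set α) := hcompl.symm
      _ ≤ _ := Cardinal.mk_le_of_injective hinj
end

section
/- Let κ be a cardinal and G a group with Alt(κ) ⊆ G ⊆ Sym(κ). For any 6-element subset A ⊆ κ, the subgroup G_A = {g ∈ G : g(a) = a for all a ∈ A} is closed in the restricted Zariski topology Z'_G on G. -/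
open Equiv

universe u

/-- The restricted Zariski topology on a group `G`, generated by the subbase of sets
`G \ {a}`, `{x : x * b * x⁻¹ ≠ a * b * a⁻¹}` and `{x : (x*c*x⁻¹) * b * (x*c*x⁻¹)⁻¹ ≠ b}`
for `a, b, c ∈ G` with `b² = c² = 1`. -/
def restrictedZariski (G : Type u) [Group G] : TopologicalSpace G :=
  TopologicalSpace.generateFrom
    ({U | ∃ a : G, U = {a}ᶜ} ∪
     {U | ∃ a b : G, b ^ 2 = 1 ∧ U = {x | x * b * x⁻¹ ≠ a * b * a⁻¹}} ∪
     {U | ∃ b c : G, b ^ 2 = 1 ∧ c ^ 2 = 1 ∧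
        U = {x | (x * c * x⁻¹) * b * (x * c * x⁻¹)⁻¹ ≠ b}})

/-- The centralizer-type set `{x | x * b * x⁻¹ = b}` of an involution is closed. -/
lemma conj_set_closed {G : Type u} [Group G] (b : G) (hb : b ^ 2 = 1) :
    @IsClosed G (restrictedZariski G) {x : G | x * b * x⁻¹ = b} := by
  letI : TopologicalSpace G := restrictedZariski G
  constructor
  have hc : {x : G | x * b * x⁻¹ = b}ᶜ = {x : G | x * b * x⁻¹ ≠ b * b * b⁻¹} := by
    ext x
    simp [mul_inv_cancel_right]
  rw [hc]
  exact TopologicalSpace.GenerateOpen.basic _ (Or.inl (Or.inr ⟨b, b, hb, rfl⟩))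

/-- Pick an element out of a set of known encard. -/
lemma pick_elt {β : Type u} {s : Set β} {n : ℕ∞} (h : s.encard = n + 1) :
    ∃ x ∈ s, (s \ {x}).encard = n := by
  obtain ⟨x, hx⟩ := Set.nonempty_of_encard_ne_zero (s := s)
    (by rw [h]; exact fun hc => by simp at hc)
  refine ⟨x, hx, ?_⟩
  have h2 := Set.encard_diff_singleton_add_one hx
  rw [h] at h2
  exact WithTop.add_right_cancel WithTop.one_ne_top h2

/-- Auxiliary involution: the product of two disjoint transpositions on a quadruple,
as an element of the subgroup `G`, or `1` if the quadruple is degenerate. -/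
private def quadInvol {α : Type u} [DecidableEq α] (G : Subgroup (Equiv.Perm α))
    (hmem : ∀ x y z w : α, x ≠ y → z ≠ w → (swap x y * swap z w : Equiv.Perm α) ∈ G)
    (x y z w : α) : G :=
  if h : x ≠ y ∧ x ≠ z ∧ x ≠ w ∧ y ≠ z ∧ y ≠ w ∧ z ≠ w
  then ⟨swap x y * swap z w, hmem x y z w h.1 h.2.2.2.2.2⟩ else 1

private lemma quadInvol_sq {α : Type u} [DecidableEq α] (G : Subgroup (Equiv.Perm α))
    (hmem : ∀ x y z w : α, x ≠ y → z ≠ w → (swap x y * swap z w : Equiv.Perm α) ∈ G)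
    (x y z w : α) : (quadInvol G hmem x y z w) ^ 2 = 1 := by
  rw [quadInvol]
  split_ifs with h
  · obtain ⟨hxy, hxz, hxw, hyz, hyw, hzw⟩ := h
    have hdis : Equiv.Perm.Disjoint (swap x y) (swap z w) := by
      intro p
      rcases eq_or_ne p x with rfl | hpx
      · right; exact swap_apply_of_ne_of_ne hxz hxw
      rcases eq_or_ne p y with rfl | hpy
      · right; exact swap_apply_of_ne_of_ne hyz hyw
      · left; exact swap_apply_of_ne_of_ne hpx hpy
    apply Subtype.ext
    rw [SubmonoidClass.coe_pow]
    show (swap x y * swap z w) ^ 2 = 1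
    rw [sq, show swap x y * swap z w * (swap x y * swap z w)
        = swap x y * (swap z w * swap x y) * swap z w by group,
      hdis.commute.symm.eq,
      show swap x y * (swap x y * swap z w) * swap z w
        = swap x y * swap x y * (swap z w * swap z w) by group,
      swap_mul_self, swap_mul_self, one_mul]
  · exact one_pow 2

/-- For a group `G` with `Alt(α) ⊆ G ⊆ Sym(α)` and any 6-element subset `A ⊆ α`, the
pointwise stabilizer `G_A = {g ∈ G : g a = a for all a ∈ A}` is closed in the restricted
Zariski topology on `G`. -/
theorem fixing_subgroup_zariski_closed (α : Type u) [DecidableEq α]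
    (G : Subgroup (Equiv.Perm α)) (hG : altGroup α ≤ G)
    (A : Set α) (hA : A.encard = 6) :
    @IsClosed G (restrictedZariski G) {g : G | ∀ a ∈ A, (g : Equiv.Perm α) a = a} := by
  classical
  letI : TopologicalSpace G := restrictedZariski G
  have hmem : ∀ x y z w : α, x ≠ y → z ≠ w → (swap x y * swap z w : Equiv.Perm α) ∈ G :=
    fun x y z w hxy hzw => hG (Subgroup.subset_closure
      ⟨swap x y, swap z w, ⟨x, y, hxy, rfl⟩, ⟨z, w, hzw, rfl⟩, rfl⟩)
  set b : α → α → α → α → G := quadInvol G hmem with hbdef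
  have hkey : {g : G | ∀ a ∈ A, (g : Equiv.Perm α) a = a} =
      ⋂ x ∈ A, ⋂ y ∈ A, ⋂ z ∈ A, ⋂ w ∈ A,
        {g : G | g * b x y z w * g⁻¹ = b x y z w} := by
    ext g
    simp only [Set.mem_setOf_eq, Set.mem_iInter]
    constructor
    · intro hg x hx y hy z hz w hw
      rw [hbdef]
      show g * quadInvol G hmem x y z w * g⁻¹ = quadInvol G hmem x y z w
      rw [quadInvol]
      split_ifs with h
      · apply Subtype.ext
        push_cast
        calc (g : Equiv.Perm α) * (swap x y * swap z w) * (g : Equiv.Perm α)⁻¹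
            = ((g : Equiv.Perm α) * swap x y * (g : Equiv.Perm α)⁻¹) *
              ((g : Equiv.Perm α) * swap z w * (g : Equiv.Perm α)⁻¹) := by group
          _ = swap x y * swap z w := by
              rw [← Equiv.swap_apply_apply, ← Equiv.swap_apply_apply,
                hg x hx, hg y hy, hg z hz, hg w hw]
      · simp
    · intro h a ha
      -- extract five further elements of `A`
      have h5 : (A \ {a}).encard = 5 := by
        have h2 := Set.encard_diff_singleton_add_one ha
        rw [hA] at h2
        exact WithTop.add_right_cancel WithTop.one_ne_top
          (h2.trans rfl)
      obtain ⟨y, hy, h4⟩ := pick_elt (n := 4) (by rw [h5]; norm_num)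
      obtain ⟨z, hz, h3⟩ := pick_elt (n := 3) (by rw [h4]; norm_num)
      obtain ⟨w, hw, h2'⟩ := pick_elt (n := 2) (by rw [h3]; norm_num)
      obtain ⟨v, hv, h1'⟩ := pick_elt (n := 1) (by rw [h2']; norm_num)
      obtain ⟨u, hu, _⟩ := pick_elt (n := 0) (by rw [h1']; norm_num)
      simp only [Set.mem_diff, Set.mem_singleton_iff] at hy hz hw hv hu
      obtain ⟨hyA, hya⟩ := hy
      obtain ⟨⟨hzA, hza⟩, hzy⟩ := hz
      obtain ⟨⟨⟨hwA, hwa⟩, hwy⟩, hwz⟩ := hw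
      obtain ⟨⟨⟨⟨hvA, hva⟩, hvy⟩, hvz⟩, hvw⟩ := hv
      obtain ⟨⟨⟨⟨⟨huA, hua⟩, huy⟩, huz⟩, huw⟩, huv⟩ := hu
      have main : ∀ p q r : α, p ∈ A → q ∈ A → r ∈ A →
          a ≠ p → a ≠ q → a ≠ r → p ≠ q → p ≠ r → q ≠ r →
          (g : Equiv.Perm α) a = a ∨ (g : Equiv.Perm α) a = p ∨
          (g : Equiv.Perm α) a = q ∨ (g : Equiv.Perm α) a = r := by
        intro p q r hp hq hr hap haq har hpq hpr hqr
        have hcomm := h a ha p hp q hq r hr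
        rw [hbdef] at hcomm
        rw [quadInvol, dif_pos ⟨hap, haq, har, hpq, hpr, hqr⟩] at hcomm
        have hperm : (g : Equiv.Perm α) * (swap a p * swap q r) * (g : Equiv.Perm α)⁻¹
            = swap a p * swap q r := by
          have := congrArg Subtype.val hcomm
          push_cast at this
          exact this
        have happ : ((g : Equiv.Perm α) * (swap a p * swap q r) * (g : Equiv.Perm α)⁻¹)
            ((g : Equiv.Perm α) a) = (swap a p * swap q r) ((g : Equiv.Perm α) a) := by
          rw [hperm]
        rw [Equiv.Perm.mul_apply, Equiv.Perm.mul_apply, Equiv.Perm.inv_def, Equiv.symm_apply_apply,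
          Equiv.Perm.mul_apply, swap_apply_of_ne_of_ne haq har, swap_apply_left,
          Equiv.Perm.mul_apply] at happ
        by_contra hcon
        push_neg at hcon
        obtain ⟨h1, h2, h3, h4⟩ := hcon
        rw [swap_apply_of_ne_of_ne h3 h4, swap_apply_of_ne_of_ne h1 h2] at happ
        exact hap ((g : Equiv.Perm α).injective happ).symm
      have m1 := main y z w hyA hzA hwA (Ne.symm hya) (Ne.symm hza) (Ne.symm hwa)
        (Ne.symm hzy) (Ne.symm hwy) (Ne.symm hwz)
      have m2 := main y v u hyA hvA huA (Ne.symm hya) (Ne.symm hva) (Ne.symm hua)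
        (Ne.symm hvy) (Ne.symm huy) (Ne.symm huv)
      have m3 := main z v u hzA hvA huA (Ne.symm hza) (Ne.symm hva) (Ne.symm hua)
        (Ne.symm hvz) (Ne.symm huz) (Ne.symm huv)
      rcases m1 with h1 | h1 | h1 | h1
      · exact h1
      · rcases m3 with h3 | h3 | h3 | h3
        · exact h3
        · exact absurd (h1.symm.trans h3) (Ne.symm hzy)
        · exact absurd (h1.symm.trans h3) (Ne.symm hvy)
        · exact absurd (h1.symm.trans h3) (Ne.symm huy)
      · rcases m2 with h2 | h2 | h2 | h2
        · exact h2
        · exact absurd (h1.symm.trans h2) hzy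
        · exact absurd (h1.symm.trans h2) (Ne.symm hvz)
        · exact absurd (h1.symm.trans h2) (Ne.symm huz)
      · rcases m2 with h2 | h2 | h2 | h2
        · exact h2
        · exact absurd (h1.symm.trans h2) hwy
        · exact absurd (h1.symm.trans h2) (Ne.symm hvw)
        · exact absurd (h1.symm.trans h2) (Ne.symm huw)
  rw [hkey]
  exact isClosed_biInter fun x _ => isClosed_biInter fun y _ => isClosed_biInter fun z _ =>
    isClosed_biInter fun w _ => conj_set_closed _ (quadInvol_sq G hmem x y z w)
end

section
/- Let κ be an infinite cardinal and G a group with Alt(κ) ⊆ G ⊆ Sym(κ). Then the topology of pointwise convergence on G (generated by the sets {g ∈ G : g(a) = b} for a, b ∈ κ) coincides with the restricted Zariski topology Z'_G on G. -/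
open Equiv Topology

universe u

section Aux
variable {α : Type*} [DecidableEq α]

lemma exists_inj_avoid {α : Type*} [Infinite α] (β : Type*) [Fintype β] [DecidableEq β]
    (s : Finset α) :
    ∃ f : β → α, Function.Injective f ∧ ∀ i, f i ∉ s := by
  have hs : (↑s : Set α)ᶜ.Infinite := (s.finite_toSet).infinite_compl
  haveI := hs.to_subtype
  obtain ⟨e⟩ := Fintype.truncEquivFin β
  refine ⟨fun i => ((Infinite.natEmbedding _) (e i) : ((↑s : Set α)ᶜ : Set α)), ?_, ?_⟩
  · intro i j h
    exact e.injective (Fin.val_injective ((Infinite.natEmbedding _).injective (Subtype.ext h)))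
  · intro i
    exact ((Infinite.natEmbedding ((↑s : Set α)ᶜ : Set α)) (e i)).2

lemma moved_mem {a u v w y : α} (h : (swap a u * swap v w) y ≠ y) :
    y = a ∨ y = u ∨ y = v ∨ y = w := by
  by_contra hc
  push_neg at hc
  obtain ⟨h1, h2, h3, h4⟩ := hc
  simp [Perm.mul_apply, swap_apply_of_ne_of_ne, h1, h2, h3, h4] at h

lemma dswap_commute {a u v w b p q r : α}
    (h : ∀ y, (y = a ∨ y = u ∨ y = v ∨ y = w) → y ≠ b ∧ y ≠ p ∧ y ≠ q ∧ y ≠ r) :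
    Commute (swap a u * swap v w) (swap b p * swap q r) := by
  apply Equiv.Perm.Disjoint.commute
  intro y
  by_cases hy : (swap a u * swap v w) y = y
  · exact Or.inl hy
  · obtain ⟨h1, h2, h3, h4⟩ := h y (moved_mem hy)
    right
    simp [Perm.mul_apply, swap_apply_of_ne_of_ne, h1, h2, h3, h4]

lemma conj_dswap (x : Perm α) (a u v w : α) :
    x * (swap a u * swap v w) * x⁻¹ = swap (x a) (x u) * swap (x v) (x w) := by
  rw [swap_apply_apply, swap_apply_apply]
  group

lemma dswap_sq {a u v w : α} (hav : a ≠ v) (haw : a ≠ w) (huv : u ≠ v) (huw : u ≠ w) :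
    (swap a u * swap v w) ^ 2 = 1 := by
  have hc : Commute (swap a u) (swap v w) := by
    apply Equiv.Perm.Disjoint.commute
    intro y
    by_cases hy : swap a u y = y
    · exact Or.inl hy
    · rcases swap_apply_ne_self_iff.1 hy with ⟨-, rfl | rfl⟩ <;> right <;>
        simp [swap_apply_of_ne_of_ne, *]
  rw [sq, mul_assoc, ← mul_assoc (swap v w), ← hc.eq]
  simp [mul_assoc]

lemma conj_swap_ne {b x1 x2 x3 p q r : α}
    (hbx2 : b ≠ x2) (hbx3 : b ≠ x3) (hbq : b ≠ q) (hbr : b ≠ r)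
    (hpb : p ≠ b) (hpx1 : p ≠ x1) (hpx2 : p ≠ x2) (hpx3 : p ≠ x3)
    (hx1b : x1 ≠ b) (hx1p : x1 ≠ p) (hx1q : x1 ≠ q) (hx1r : x1 ≠ r) :
    (swap b x1 * swap x2 x3) * (swap b p * swap q r) * (swap b x1 * swap x2 x3)⁻¹
      ≠ swap b p * swap q r := by
  intro H
  have H2 : (swap b x1 * swap x2 x3) * (swap b p * swap q r)
      = (swap b p * swap q r) * (swap b x1 * swap x2 x3) := by
    have := congrArg (· * (swap b x1 * swap x2 x3)) H
    simpa [mul_assoc] using this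
  have hb := congrArg (fun π : Perm α => π b) H2
  simp only [Perm.mul_apply] at hb
  rw [swap_apply_of_ne_of_ne hbq hbr, swap_apply_left,
    swap_apply_of_ne_of_ne hpx2 hpx3, swap_apply_of_ne_of_ne hpb hpx1,
    swap_apply_of_ne_of_ne hbx2 hbx3, swap_apply_left,
    swap_apply_of_ne_of_ne hx1q hx1r, swap_apply_of_ne_of_ne hx1b hx1p] at hb
  exact hpx1 hb

lemma meets_of_conj_ne {x : Perm α} {a u v w b p q r : α}
    (H : (x * (swap a u * swap v w) * x⁻¹) * (swap b p * swap q r) *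
        (x * (swap a u * swap v w) * x⁻¹)⁻¹ ≠ swap b p * swap q r) :
    (x a = b ∨ x a = p ∨ x a = q ∨ x a = r) ∨
    (x u = b ∨ x u = p ∨ x u = q ∨ x u = r) ∨
    (x v = b ∨ x v = p ∨ x v = q ∨ x v = r) ∨
    (x w = b ∨ x w = p ∨ x w = q ∨ x w = r) := by
  by_contra hc
  push_neg at hc
  obtain ⟨h1, h2, h3, h4⟩ := hc
  rw [conj_dswap x a u v w] at H
  have hcom : Commute (swap (x a) (x u) * swap (x v) (x w)) (swap b p * swap q r) := by
    apply dswap_commute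
    rintro y (rfl | rfl | rfl | rfl)
    exacts [h1, h2, h3, h4]
  exact H (by rw [hcom.eq]; exact mul_inv_cancel_right _ _)
end Aux

section Main
variable {α : Type u} [DecidableEq α] [Infinite α]

lemma dswap_mem_alt {a u v w : α} (hau : a ≠ u) (hvw : v ≠ w) :
    swap a u * swap v w ∈ altGroup α :=
  Subgroup.subset_closure ⟨swap a u, swap v w, ⟨a, u, hau, rfl⟩, ⟨v, w, hvw, rfl⟩, rfl⟩

lemma key_open (G : Subgroup (Perm α)) (hG : altGroup α ≤ G) (a b : α) :
    IsOpen[restrictedZariski G] {x : G | (x : Perm α) a = b} := by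
  letI := restrictedZariski G
  show IsOpen {x : G | (x : Perm α) a = b}
  rw [isOpen_iff_forall_mem_open]
  intro g₀ hg₀
  simp only [Set.mem_setOf_eq] at hg₀
  obtain ⟨f, hfi, hfav⟩ := exists_inj_avoid (Fin 5 × Fin 3) ({a} : Finset α)
  obtain ⟨h, hhi, hhav⟩ := exists_inj_avoid (Fin 2 × Fin 3)
      (insert b (Finset.image (fun j => (g₀ : Perm α) (f j)) Finset.univ))
  have hfa : ∀ j, f j ≠ a := fun j => by simpa using hfav j
  have hhb : ∀ j, h j ≠ b := fun j e => (hhav j) (by simp [e])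
  have hhg : ∀ j j', h j ≠ (g₀ : Perm α) (f j') := fun j j' e =>
    (hhav j) (Finset.mem_insert_of_mem (Finset.mem_image.2 ⟨j', Finset.mem_univ _, e.symm⟩))
  have ginj : Function.Injective (g₀ : Perm α) := (g₀ : Perm α).injective
  have cmem : ∀ i : Fin 5, swap a (f (i,0)) * swap (f (i,1)) (f (i,2)) ∈ G := fun i =>
    hG (dswap_mem_alt (hfa (i,0)).symm (hfi.ne (by simp)))
  have tmem : ∀ k : Fin 2, swap b (h (k,0)) * swap (h (k,1)) (h (k,2)) ∈ G := fun k =>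
    hG (dswap_mem_alt (hhb (k,0)).symm (hhi.ne (by simp)))
  let C : Fin 5 → G := fun i => ⟨_, cmem i⟩
  let T : Fin 2 → G := fun k => ⟨_, tmem k⟩
  have hCc : ∀ i, (C i : Perm α) = swap a (f (i,0)) * swap (f (i,1)) (f (i,2)) := fun _ => rfl
  have hTc : ∀ k, (T k : Perm α) = swap b (h (k,0)) * swap (h (k,1)) (h (k,2)) := fun _ => rfl
  have hC2 : ∀ i, (C i) ^ 2 = 1 := fun i => Subtype.ext (by
    rw [Subgroup.coe_pow, hCc, OneMemClass.coe_one]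
    exact dswap_sq (hfa (i,1)).symm (hfa (i,2)).symm (hfi.ne (by simp)) (hfi.ne (by simp)))
  have hT2 : ∀ k, (T k) ^ 2 = 1 := fun k => Subtype.ext (by
    rw [Subgroup.coe_pow, hTc, OneMemClass.coe_one]
    exact dswap_sq (hhb (k,1)).symm (hhb (k,2)).symm (hhi.ne (by simp)) (hhi.ne (by simp)))
  refine ⟨⋂ i : Fin 5, ⋂ k : Fin 2,
      {x : G | (x * C i * x⁻¹) * T k * (x * C i * x⁻¹)⁻¹ ≠ T k}, ?_, ?_, ?_⟩
  · -- subset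
    intro x hx
    simp only [Set.mem_iInter, Set.mem_setOf_eq] at hx
    have gne : ∀ (i : Fin 5) (k : Fin 2),
        ((x : Perm α) * (swap a (f (i,0)) * swap (f (i,1)) (f (i,2))) * (x : Perm α)⁻¹) *
          (swap b (h (k,0)) * swap (h (k,1)) (h (k,2))) *
          ((x : Perm α) * (swap a (f (i,0)) * swap (f (i,1)) (f (i,2))) * (x : Perm α)⁻¹)⁻¹
          ≠ swap b (h (k,0)) * swap (h (k,1)) (h (k,2)) := by
      intro i k e
      exact hx i k (Subtype.ext (by
        simp only [Subgroup.coe_mul, Subgroup.coe_inv, hCc, hTc]; exact e))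
    have key : ∀ k : Fin 2,
        (x : Perm α) a = b ∨ (x : Perm α) a = h (k,0) ∨ (x : Perm α) a = h (k,1) ∨
          (x : Perm α) a = h (k,2) := by
      intro k
      by_contra hcon
      push_neg at hcon
      obtain ⟨hb0, h0, h1, h2⟩ := hcon
      have pick : ∀ i : Fin 5, ∃ j : Fin 3,
          (x : Perm α) (f (i,j)) ∈ ({b, h (k,0), h (k,1), h (k,2)} : Finset α) := by
        intro i
        rcases meets_of_conj_ne (gne i k) with h' | h' | h' | h'
        · rcases h' with e | e | e | e
          exacts [absurd e hb0, absurd e h0, absurd e h1, absurd e h2]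
        · exact ⟨0, by simp only [Finset.mem_insert, Finset.mem_singleton]; tauto⟩
        · exact ⟨1, by simp only [Finset.mem_insert, Finset.mem_singleton]; tauto⟩
        · exact ⟨2, by simp only [Finset.mem_insert, Finset.mem_singleton]; tauto⟩
      choose j hj using pick
      have hcard : Fintype.card ({b, h (k,0), h (k,1), h (k,2)} : Finset α) < 5 := by
        rw [Fintype.card_coe]
        have c1 := Finset.card_insert_le b ({h (k,0), h (k,1), h (k,2)} : Finset α)
        have c2 := Finset.card_insert_le (h (k,0)) ({h (k,1), h (k,2)} : Finset α)
        have c3 := Finset.card_insert_le (h (k,1)) ({h (k,2)} : Finset α)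
        have c4 : ({h (k,2)} : Finset α).card = 1 := Finset.card_singleton _
        omega
      obtain ⟨i, i', hne, heq⟩ := Fintype.exists_ne_map_eq_of_card_lt
        (fun i : Fin 5 =>
          (⟨(x : Perm α) (f (i, j i)), hj i⟩ :
            {y // y ∈ ({b, h (k,0), h (k,1), h (k,2)} : Finset α)})) hcard
      exact hne (congrArg Prod.fst (hfi ((x : Perm α).injective (Subtype.ext_iff.1 heq))))
    simp only [Set.mem_setOf_eq]
    rcases key 0 with hb' | hk
    · exact hb'
    rcases key 1 with hb' | hk'
    · exact hb'
    exfalso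
    rcases hk with e | e | e <;> rcases hk' with e' | e' | e' <;>
      exact absurd (congrArg Prod.fst (hhi (e.symm.trans e'))) (by decide)
  · -- open
    refine isOpen_iInter_of_finite fun i => isOpen_iInter_of_finite fun k => ?_
    exact TopologicalSpace.isOpen_generateFrom_of_mem
      (Set.mem_union_right _ ⟨T k, C i, hT2 k, hC2 i, rfl⟩)
  · -- g₀ mem
    simp only [Set.mem_iInter, Set.mem_setOf_eq]
    intro i k e
    have e' := congrArg (fun z : G => (z : Perm α)) e
    simp only [Subgroup.coe_mul, Subgroup.coe_inv, hCc, hTc] at e'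
    rw [conj_dswap (g₀ : Perm α) a, hg₀] at e'
    refine conj_swap_ne ?_ ?_ ?_ ?_ ?_ ?_ ?_ ?_ ?_ ?_ ?_ ?_ e'
    · exact fun e => hfa (i,1) (ginj (hg₀.trans e)).symm
    · exact fun e => hfa (i,2) (ginj (hg₀.trans e)).symm
    · exact (hhb (k,1)).symm
    · exact (hhb (k,2)).symm
    · exact hhb (k,0)
    · exact hhg (k,0) (i,0)
    · exact hhg (k,0) (i,1)
    · exact hhg (k,0) (i,2)
    · exact fun e => hfa (i,0) (ginj (e.trans hg₀.symm))
    · exact (hhg (k,0) (i,0)).symm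
    · exact (hhg (k,1) (i,0)).symm
    · exact (hhg (k,2) (i,0)).symm
end Main

section Easy
variable {α : Type u} [DecidableEq α]

abbrev ptTop (G : Subgroup (Perm α)) : TopologicalSpace G :=
  TopologicalSpace.induced (fun g : G => ((g : Equiv.Perm α) : α → α))
    (@Pi.topologicalSpace α (fun _ => α) (fun _ => ⊥))

lemma pt_open (G : Subgroup (Perm α)) (y z : α) :
    IsOpen[ptTop G] {x : G | (x : Perm α) y = z} := by
  letI : TopologicalSpace α := ⊥
  haveI : DiscreteTopology α := ⟨rfl⟩
  have hU : IsOpen ((fun h : α → α => h y) ⁻¹' ({z} : Set α)) :=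
    (continuous_apply y).isOpen_preimage _ (isOpen_discrete _)
  exact isOpen_induced_iff.mpr ⟨_, hU, rfl⟩

lemma exists_ne_point {G : Subgroup (Perm α)} {A B : G} (h : A ≠ B) :
    ∃ y, (A : Perm α) y ≠ (B : Perm α) y := by
  by_contra hc
  push_neg at hc
  exact h (Subtype.ext (Equiv.ext hc))

end Easy

theorem Equiv.Perm.apply_inv_self {β : Type*} (f : Perm β) (x : β) : f (f⁻¹ x) = x :=
  Equiv.apply_symm_apply f x

theorem Equiv.Perm.inv_apply_self {β : Type*} (f : Perm β) (x : β) : f⁻¹ (f x) = x :=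
  Equiv.symm_apply_apply f x

section Cases
variable {α : Type u} [DecidableEq α]

lemma case1 (G : Subgroup (Perm α)) (a₀ : G) : IsOpen[ptTop G] ({a₀}ᶜ : Set G) := by
  letI := ptTop G
  have hset : ({a₀}ᶜ : Set G) =
      ⋃ y : α, ⋃ z : α, ⋃ _ : z ≠ (a₀ : Perm α) y, {x : G | (x : Perm α) y = z} := by
    ext x
    simp only [Set.mem_compl_iff, Set.mem_singleton_iff, Set.mem_iUnion, Set.mem_setOf_eq]
    constructor
    · intro hxa
      obtain ⟨y, hy⟩ := exists_ne_point hxa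
      exact ⟨y, _, hy, rfl⟩
    · rintro ⟨y, z, hz, hxy⟩ rfl
      exact hz hxy.symm
  rw [hset]
  exact isOpen_iUnion fun y => isOpen_iUnion fun z => isOpen_iUnion fun _ => pt_open G y z

lemma case2 (G : Subgroup (Perm α)) (aa bb : G) :
    IsOpen[ptTop G] {x : G | x * bb * x⁻¹ ≠ aa * bb * aa⁻¹} := by
  letI := ptTop G
  have hset : {x : G | x * bb * x⁻¹ ≠ aa * bb * aa⁻¹} =
      ⋃ z : α, ⋃ u : α, ⋃ v : α,
        ⋃ _ : u ≠ (aa : Perm α) ((bb : Perm α) ((aa : Perm α)⁻¹ v)),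
          ({x : G | (x : Perm α) ((bb : Perm α) z) = u} ∩ {x : G | (x : Perm α) z = v}) := by
    ext x
    simp only [Set.mem_setOf_eq, Set.mem_iUnion, Set.mem_inter_iff]
    constructor
    · intro hne
      obtain ⟨y, hy⟩ := exists_ne_point hne
      simp only [Subgroup.coe_mul, Subgroup.coe_inv, Perm.mul_apply] at hy
      exact ⟨(x : Perm α)⁻¹ y, _, y, hy, rfl, Perm.apply_inv_self _ _⟩
    · rintro ⟨z, u, v, huv, h1, h2⟩ e
      have e' := congrArg (fun gg : G => (gg : Perm α) v) e
      simp only [Subgroup.coe_mul, Subgroup.coe_inv, Perm.mul_apply] at e'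
      rw [show ((x : Perm α))⁻¹ v = z from by rw [← h2, Perm.inv_apply_self], h1] at e'
      exact huv e'
  rw [hset]
  exact isOpen_iUnion fun z => isOpen_iUnion fun u => isOpen_iUnion fun v =>
    isOpen_iUnion fun _ => (pt_open G _ _).inter (pt_open G _ _)

lemma case3 (G : Subgroup (Perm α)) (bb cc : G) (hc2 : cc ^ 2 = 1) :
    IsOpen[ptTop G] {x : G | (x * cc * x⁻¹) * bb * (x * cc * x⁻¹)⁻¹ ≠ bb} := by
  letI := ptTop G
  have hcc : (cc : Perm α) * (cc : Perm α) = 1 := by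
    rw [← sq, ← Subgroup.coe_pow, hc2, OneMemClass.coe_one]
  have hCinv : ((cc : Perm α))⁻¹ = (cc : Perm α) := inv_eq_of_mul_eq_one_right hcc
  have hCC : ∀ t : α, (cc : Perm α) ((cc : Perm α) t) = t := by
    intro t
    rw [← Perm.mul_apply, hcc, Perm.one_apply]
  have hset : {x : G | (x * cc * x⁻¹) * bb * (x * cc * x⁻¹)⁻¹ ≠ bb} =
      ⋃ z : α, ⋃ v1 : α, ⋃ v2 : α, ⋃ u1 : α, ⋃ u2 : α,
        ⋃ _ : u1 ≠ (bb : Perm α) u2,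
          ({x : G | (x : Perm α) v1 = (bb : Perm α) z} ∩ {x : G | (x : Perm α) v2 = z} ∩
           {x : G | (x : Perm α) ((cc : Perm α) v1) = u1} ∩
           {x : G | (x : Perm α) ((cc : Perm α) v2) = u2}) := by
    ext x
    simp only [Set.mem_setOf_eq, Set.mem_iUnion, Set.mem_inter_iff]
    constructor
    · intro hne
      obtain ⟨y, hy⟩ := exists_ne_point hne
      simp only [Subgroup.coe_mul, Subgroup.coe_inv, mul_inv_rev, inv_inv, hCinv,
        Perm.mul_apply] at hy
      refine ⟨(x : Perm α) ((cc : Perm α) ((x : Perm α)⁻¹ y)),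
        (x : Perm α)⁻¹ ((bb : Perm α) ((x : Perm α) ((cc : Perm α) ((x : Perm α)⁻¹ y)))),
        (cc : Perm α) ((x : Perm α)⁻¹ y), _, y, hy, ⟨⟨?_, rfl⟩, rfl⟩, ?_⟩
      · exact Perm.apply_inv_self _ _
      · rw [hCC]
        exact Perm.apply_inv_self _ _
    · rintro ⟨z, v1, v2, u1, u2, huv, hm⟩ e
      obtain ⟨⟨⟨m1, m2⟩, m3⟩, m4⟩ := hm
      have e' := congrArg (fun gg : G => (gg : Perm α) ((x : Perm α) ((cc : Perm α) v2))) e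
      simp only [Subgroup.coe_mul, Subgroup.coe_inv, mul_inv_rev, inv_inv, hCinv,
        Perm.mul_apply] at e'
      rw [Perm.inv_apply_self, hCC, m2, m4, ← m1, Perm.inv_apply_self, m3] at e'
      exact huv e'
  rw [hset]
  exact isOpen_iUnion fun z => isOpen_iUnion fun v1 => isOpen_iUnion fun v2 =>
    isOpen_iUnion fun u1 => isOpen_iUnion fun u2 => isOpen_iUnion fun _ =>
      (((pt_open G _ _).inter (pt_open G _ _)).inter (pt_open G _ _)).inter (pt_open G _ _)
end Cases


/-- For an infinite type `α` and a group `G` with `Alt(α) ⊆ G ⊆ Sym(α)`, the topology of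
pointwise convergence on `G` (the topology induced from the product topology on `α → α`
with `α` discrete) coincides with the restricted Zariski topology on `G`. -/
theorem pointwise_eq_zariski (α : Type u) [DecidableEq α] [Infinite α]
    (G : Subgroup (Equiv.Perm α)) (hG : altGroup α ≤ G) :
    TopologicalSpace.induced (fun g : G => ((g : Equiv.Perm α) : α → α))
        (@Pi.topologicalSpace α (fun _ => α) (fun _ => ⊥)) =
      restrictedZariski G := by
  refine le_antisymm ?_ ?_
  · apply le_generateFrom
    intro s hs
    simp only [Set.mem_union, Set.mem_setOf_eq] at hs
    rcases hs with (⟨a₀, rfl⟩ | ⟨aa, bb, hb2, rfl⟩) | ⟨bb, cc, hb2, hc2, rfl⟩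
    · exact case1 G a₀
    · exact case2 G aa bb
    · exact case3 G bb cc hc2
  · have hPi : (@Pi.topologicalSpace α (fun _ => α) (fun _ => (⊥ : TopologicalSpace α))) =
        ⨅ y : α, TopologicalSpace.induced (fun h : α → α => h y) ⊥ := rfl
    rw [hPi, induced_iInf]
    refine le_iInf fun y => ?_
    rw [induced_compose]
    refine continuous_iff_le_induced.mp ?_
    letI := restrictedZariski G
    rw [continuous_def]
    intro s _
    have hset : ((fun h : α → α => h y) ∘ fun g : G => ((g : Equiv.Perm α) : α → α)) ⁻¹' s =
        ⋃ z ∈ s, {x : G | (x : Equiv.Perm α) y = z} := by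
      ext x
      simp only [Set.mem_preimage, Function.comp_apply, Set.mem_iUnion, Set.mem_setOf_eq,
        exists_prop]
      constructor
      · intro hm
        exact ⟨_, hm, rfl⟩
      · rintro ⟨z, hz, e⟩
        rwa [e]
    rw [hset]
    exact isOpen_biUnion fun z _ => key_open G hG y z
end

section
/- Every infinite abelian group G has weak compatibility number cn(G) = ω; i.e., G satisfies the weak ω₁-compatibility condition: for any finite group F and isomorphisms f_i : F → F_i (i < ω₁) onto finite subgroups F_i of G, there exist i < j < ω₁ and a homomorphism φ : F_i + F_j → F with φ ∘ f_i = φ ∘ f_j = id_F. -/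
open Cardinal Set

universe u v w



lemma delta_aux {γ : Type w} [DecidableEq γ] : ∀ (n : ℕ) (ι : Type v) (_ : Uncountable ι)
    (A : ι → Finset γ), (∀ i, (A i).card ≤ n) →
    ∃ (T : Set ι) (D : Finset γ), T.Infinite ∧
      ∀ i ∈ T, ∀ j ∈ T, i ≠ j → A i ∩ A j = D := by
  intro n
  induction n with
  | zero =>
    intro ι hι A hA
    refine ⟨Set.univ, ∅, Set.infinite_univ, ?_⟩
    intro i _ j _ _
    have h : A i = ∅ := Finset.card_eq_zero.mp (Nat.le_zero.mp (hA i))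
    simp [h]
  | succ n ih =>
    intro ι hι A hA
    classical
    by_cases hx : ∃ x, ¬ ({i | x ∈ A i} : Set ι).Countable
    · obtain ⟨x, hx⟩ := hx
      set s : Set ι := {i | x ∈ A i} with hs
      have hunc : Uncountable ↥s :=
        not_countable_iff.mp (fun h => hx (Set.countable_coe_iff.mpr h))
      have hxmem : ∀ i : ↥s, x ∈ A i.1 := fun i => i.2
      let B : ↥s → Finset γ := fun i => (A i.1).erase x
      have hB : ∀ i, (B i).card ≤ n := by
        intro i
        have := Finset.card_erase_of_mem (hxmem i)
        have h2 := hA i.1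
        simp only [B, this]
        omega
      obtain ⟨T', D', hT', hpair'⟩ := ih ↥s hunc B hB
      refine ⟨Subtype.val '' T', insert x D',
        hT'.image (Set.injOn_of_injective Subtype.val_injective), ?_⟩
      rintro _ ⟨i', hi', rfl⟩ _ ⟨j', hj', rfl⟩ hij
      have hne : i' ≠ j' := fun h => hij (by rw [h])
      have h' := hpair' i' hi' j' hj' hne
      ext a
      simp only [Finset.mem_inter, Finset.mem_insert]
      constructor
      · rintro ⟨ha1, ha2⟩
        by_cases hax : a = x
        · exact Or.inl hax
        · right
          have : a ∈ B i' ∩ B j' := by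
            simp only [Finset.mem_inter, B, Finset.mem_erase]
            exact ⟨⟨hax, ha1⟩, ⟨hax, ha2⟩⟩
          rwa [h'] at this
      · rintro (rfl | ha)
        · exact ⟨hxmem i', hxmem j'⟩
        · have : a ∈ B i' ∩ B j' := by rw [h']; exact ha
          simp only [Finset.mem_inter, B, Finset.mem_erase] at this
          exact ⟨this.1.2, this.2.2⟩
    · push_neg at hx
      by_cases hemp : ({i | A i = ∅} : Set ι).Infinite
      · refine ⟨{i | A i = ∅}, ∅, hemp, ?_⟩
        intro i hi j hj hij
        rw [Set.mem_setOf_eq] at hi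
        simp [hi]
      · rw [Set.not_infinite] at hemp
        set P : Set (Set ι) :=
          {M | (∀ i ∈ M, A i ≠ ∅) ∧ M.Pairwise fun i j => Disjoint (A i) (A j)} with hP
        obtain ⟨M, hMmax⟩ := zorn_subset P (by
          intro c hc hchain
          refine ⟨⋃₀ c, ⟨?_, ?_⟩, fun s hs => Set.subset_sUnion_of_mem hs⟩
          · rintro i ⟨t, htc, hit⟩
            exact (hc htc).1 i hit
          · rintro i ⟨t, htc, hit⟩ j ⟨t', htc', hjt'⟩ hij
            rcases hchain.total htc htc' with h | h
            · exact (hc htc').2 (h hit) hjt' hij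
            · exact (hc htc).2 hit (h hjt') hij)
        by_cases hMinf : M.Infinite
        · refine ⟨M, ∅, hMinf, ?_⟩
          intro i hi j hj hij
          exact Finset.disjoint_iff_inter_eq_empty.mp (hMmax.1.2 hi hj hij)
        · exfalso
          rw [Set.not_infinite] at hMinf
          let U : Finset γ := hMinf.toFinset.biUnion (fun i => A i)
          have hblocked : (({i | A i = ∅} : Set ι) ∪
              ⋃ x ∈ (U : Set γ), {i | x ∈ A i}).Countable :=
            hemp.countable.union (Set.Countable.biUnion U.countable_toSet (fun x _ => hx x))
          have hj : ∃ j, j ∉ (({i | A i = ∅} : Set ι) ∪ ⋃ x ∈ (U : Set γ), {i | x ∈ A i}) := by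
            by_contra h
            push_neg at h
            have huniv : (Set.univ : Set ι).Countable :=
              hblocked.mono (fun i _ => h i)
            exact (not_countable_iff.mpr hι) (Set.countable_univ_iff.mp huniv)
          obtain ⟨j, hjb⟩ := hj
          simp only [Set.mem_union, Set.mem_setOf_eq, Set.mem_iUnion, not_or, not_exists] at hjb
          obtain ⟨hj1, hj2⟩ := hjb
          have hdisj : ∀ i ∈ M, Disjoint (A j) (A i) := by
            intro i hiM
            rw [Finset.disjoint_left]
            intro a haj hai
            have haU : a ∈ U := Finset.mem_biUnion.mpr ⟨i, hMinf.mem_toFinset.mpr hiM, hai⟩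
            exact hj2 a haU haj
          have hjM : j ∉ M := by
            intro hjM
            obtain ⟨a, ha⟩ := Finset.nonempty_of_ne_empty hj1
            have haU : a ∈ U := Finset.mem_biUnion.mpr ⟨j, hMinf.mem_toFinset.mpr hjM, ha⟩
            exact hj2 a haU ha
          have hPins : insert j M ∈ P := by
            constructor
            · rintro i (rfl | hiM)
              · exact hj1
              · exact hMmax.1.1 i hiM
            · refine Set.pairwise_insert.mpr
                ⟨hMmax.1.2, fun i hiM _ => ⟨hdisj i hiM, (hdisj i hiM).symm⟩⟩
          exact hjM (hMmax.2 hPins (Set.subset_insert j M) (Set.mem_insert j M))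


lemma buildPhi {G : Type u} [AddCommGroup G] {F : Type} [AddGroup F]
    (Hi Hj : AddSubgroup G) (fi : F ≃+ Hi) (fj : F ≃+ Hj)
    (hagree : ∀ (x : G) (hx : x ∈ Hi) (hy : x ∈ Hj), fi.symm ⟨x, hx⟩ = fj.symm ⟨x, hy⟩) :
    ∃ φ : (Hi ⊔ Hj : AddSubgroup G) →+ F,
      (∀ x, φ (AddSubgroup.inclusion le_sup_left (fi x)) = x) ∧
      (∀ x, φ (AddSubgroup.inclusion le_sup_right (fj x)) = x) := by
  have comm : ∀ a b : F, a + b = b + a := fun a b =>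
    fi.injective (by rw [map_add, map_add, add_comm])
  letI : AddCommGroup F := { ‹AddGroup F› with add_comm := comm }
  have wd : ∀ (x : Hi) (y : Hj) (x' : Hi) (y' : Hj), (x : G) + (y : G) = (x' : G) + (y' : G) →
      fi.symm x + fj.symm y = fi.symm x' + fj.symm y' := by
    intro x y x' y' h
    have hsub : ((x - x' : Hi) : G) = ((y' - y : Hj) : G) := by
      push_cast
      rw [sub_eq_sub_iff_add_eq_add, h]
      exact add_comm _ _
    have key := hagree ((x - x' : Hi) : G) (x - x').2 (by rw [hsub]; exact (y' - y).2)
    have key2 : fi.symm (x - x') = fj.symm (y' - y) :=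
      key.trans (congrArg _ (Subtype.ext hsub))
    rw [map_sub, map_sub] at key2
    have h3 := sub_eq_sub_iff_add_eq_add.mp key2
    rw [h3, add_comm]
  have hz : ∀ z : (Hi ⊔ Hj : AddSubgroup G), ∃ p : Hi × Hj,
      ((p.1 : G) + (p.2 : G)) = (z : G) := by
    intro z
    obtain ⟨y, hy, w, hw, h⟩ := AddSubgroup.mem_sup.mp z.2
    exact ⟨(⟨y, hy⟩, ⟨w, hw⟩), h⟩
  choose p hp using hz
  have hadd : ∀ a b : (Hi ⊔ Hj : AddSubgroup G),
      fi.symm (p (a + b)).1 + fj.symm (p (a + b)).2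
        = (fi.symm (p a).1 + fj.symm (p a).2)
          + (fi.symm (p b).1 + fj.symm (p b).2) := by
    intro a b
    have h1 : ((p (a + b)).1 : G) + ((p (a + b)).2 : G)
        = (((p a).1 + (p b).1 : Hi) : G) + (((p a).2 + (p b).2 : Hj) : G) := by
      rw [hp (a + b)]
      push_cast
      rw [← hp a, ← hp b]
      abel
    have h2 := wd _ _ _ _ h1
    rw [h2, map_add, map_add]
    abel
  refine ⟨AddMonoidHom.mk' (fun z => fi.symm (p z).1 + fj.symm (p z).2) hadd, ?_, ?_⟩
  · intro x
    set z := AddSubgroup.inclusion (le_sup_left : Hi ≤ Hi ⊔ Hj) (fi x) with hzdef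
    have hz' : ((p z).1 : G) + ((p z).2 : G) = ((fi x : Hi) : G) + ((0 : Hj) : G) := by
      rw [hp z, hzdef]
      simp
    have h2 := wd _ _ _ _ hz'
    show fi.symm (p z).1 + fj.symm (p z).2 = x
    rw [h2]
    simp
  · intro x
    set z := AddSubgroup.inclusion (le_sup_right : Hj ≤ Hi ⊔ Hj) (fj x) with hzdef
    have hz' : ((p z).1 : G) + ((p z).2 : G) = ((0 : Hi) : G) + ((fj x : Hj) : G) := by
      rw [hp z, hzdef]
      simp
    have h2 := wd _ _ _ _ hz'
    show fi.symm (p z).1 + fj.symm (p z).2 = x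
    rw [h2]
    simp



/-- Every infinite abelian group `G` satisfies the weak `ω₁`-compatibility condition: for
any finite additive group `F` and isomorphisms `f i : F ≃+ F i` (`i < ω₁`) onto finite
subgroups `F i` of `G`, there exist `i < j < ω₁` and a homomorphism `φ : F i + F j → F`
with `φ ∘ f i = φ ∘ f j = id`. Hence the weak compatibility number of `G` is `ω`. -/
theorem abelian_weak_compat (G : Type u) [AddCommGroup G] [Infinite G] :
    ∀ (F : Type) (_ : AddGroup F) (_ : Finite F)
      (Fs : ∀ o : Ordinal.{u}, o < (Cardinal.aleph 1).ord → AddSubgroup G)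
      (f : ∀ o ho, F ≃+ Fs o ho),
      ∃ (i j : Ordinal.{u}) (hi : i < (Cardinal.aleph 1).ord)
        (hj : j < (Cardinal.aleph 1).ord), i < j ∧
        ∃ φ : (Fs i hi ⊔ Fs j hj : AddSubgroup G) →+ F,
          (∀ x, φ (AddSubgroup.inclusion le_sup_left (f i hi x)) = x) ∧
          (∀ x, φ (AddSubgroup.inclusion le_sup_right (f j hj x)) = x) := by
  intro F instF instFinF Fs f
  letI := instF
  letI := instFinF
  classical
  let ι := {o : Ordinal.{u} // o < (Cardinal.aleph 1).ord}
  have hmk : #ι = Cardinal.lift.{u+1, u} (Cardinal.aleph 1) := by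
    have h1 : #ι = #(Set.Iio ((Cardinal.aleph 1).ord)) := rfl
    rw [h1, Ordinal.mk_Iio_ordinal, Cardinal.card_ord]
  haveI hunc : Uncountable ι := by
    rw [← aleph0_lt_mk_iff, hmk, ← Cardinal.lift_aleph0.{u+1, u}]
    exact Cardinal.lift_lt.mpr aleph0_lt_aleph_one
  have hFinSub : ∀ i : ι, Finite (Fs i.1 i.2) := fun i =>
    Finite.of_equiv F (f i.1 i.2).toEquiv
  have hFin : ∀ i : ι, ((Fs i.1 i.2 : Set G)).Finite := fun i =>
    @Set.toFinite _ _ (hFinSub i)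
  let A : ι → Finset G := fun i => (hFin i).toFinset
  have hcard : ∀ i, (A i).card ≤ Nat.card F := by
    intro i
    have h1 : (A i).card = ((A i : Set G)).ncard := (Set.ncard_coe_finset _).symm
    have h2 : ((A i : Set G)) = (Fs i.1 i.2 : Set G) := (hFin i).coe_toFinset
    have h3 : (Fs i.1 i.2 : Set G).ncard = Nat.card (Fs i.1 i.2) :=
      (Nat.card_coe_set_eq _)
    have h4 : Nat.card (Fs i.1 i.2) = Nat.card F :=
      Nat.card_congr (f i.1 i.2).toEquiv.symm
    rw [h1, h2, h3, h4]
  obtain ⟨T, D, hTinf, hTpair⟩ := delta_aux (Nat.card F) ι hunc A hcard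
  haveI := hTinf.to_subtype
  haveI : Fintype {x // x ∈ D} := FinsetCoe.fintype D
  letI := Fintype.ofFinite F
  let g : ↥T → ({x // x ∈ D} → Option F) := fun i d =>
    if h : (d : G) ∈ Fs i.1.1 i.1.2 then some ((f i.1.1 i.1.2).symm ⟨d, h⟩) else none
  obtain ⟨i, j, hij, hg⟩ := Finite.exists_ne_map_eq_of_infinite g
  have hije : i.1 ≠ j.1 := fun h => hij (Subtype.ext h)
  have agree : ∀ (x : G) (hx : x ∈ Fs i.1.1 i.1.2) (hy : x ∈ Fs j.1.1 j.1.2),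
      (f i.1.1 i.1.2).symm ⟨x, hx⟩ = (f j.1.1 j.1.2).symm ⟨x, hy⟩ := by
    intro x hx hy
    have hxD : x ∈ D := by
      have hpq := hTpair i.1 i.2 j.1 j.2 hije
      rw [← hpq, Finset.mem_inter]
      constructor
      · exact (hFin i.1).mem_toFinset.mpr hx
      · exact (hFin j.1).mem_toFinset.mpr hy
    have hgg := congrFun hg ⟨x, hxD⟩
    simp only [g, dif_pos hx, dif_pos hy, Option.some.injEq] at hgg
    exact hgg
  have hord : i.1.1 ≠ j.1.1 := fun h => hije (Subtype.ext h)
  rcases hord.lt_or_gt with hlt | hlt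
  · exact ⟨i.1.1, j.1.1, i.1.2, j.1.2, hlt,
      buildPhi _ _ (f i.1.1 i.1.2) (f j.1.1 j.1.2) agree⟩
  · exact ⟨j.1.1, i.1.1, j.1.2, i.1.2, hlt,
      buildPhi _ _ (f j.1.1 j.1.2) (f i.1.1 i.1.2) (fun x hx hy => (agree x hy hx).symm)⟩
end
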